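/- A finite group G of order n is cyclic if and only if for every positive divisor d of n there exists a fuzzy subgroup μ of G whose fuzzy order equals d, i.e., d is the least positive integer m such that μ(xᵐ) = μ(e) for all x ∈ G. -/

import Mathlib

/-- A fuzzy subgroup of a group `G`: a function `μ : G → ℝ` valued in `[0,1]`
with `μ (x*y) ≥ min (μ x) (μ y)` and `μ x⁻¹ ≥ μ x`. -/
def IsFuzzySubgroup {G : Type*} [Group G] (μ : G → ℝ) : Prop :=
  (∀ x : G, 0 ≤ μ x ∧ μ x ≤ 1) ∧
  (∀ x y : G, μ (x * y) ≥ min (μ x) (μ y)) ∧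
  (∀ x : G, μ x⁻¹ ≥ μ x)

section Aux

open Subgroup

variable {G : Type*} [Group G]

lemma fuzzy_le_one {μ : G → ℝ} (hμ : IsFuzzySubgroup μ) (x : G) : μ x ≤ μ 1 := by
  obtain ⟨_, hmul, hinv⟩ := hμ
  have h := hmul x x⁻¹
  rw [mul_inv_cancel] at h
  calc μ x = min (μ x) (μ x) := (min_self _).symm
    _ ≤ min (μ x) (μ x⁻¹) := min_le_min le_rfl (hinv x)
    _ ≤ μ 1 := h

/-- The top level set of a fuzzy subgroup is a subgroup. -/
def levelSubgroup {μ : G → ℝ} (hμ : IsFuzzySubgroup μ) : Subgroup G where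
  carrier := {x | μ x = μ 1}
  one_mem' := rfl
  mul_mem' := fun {a b} ha hb => le_antisymm (fuzzy_le_one hμ _) (by
    have h := hμ.2.1 a b
    have ha' : μ a = μ 1 := ha
    have hb' : μ b = μ 1 := hb
    calc μ 1 = min (μ a) (μ b) := by rw [ha', hb', min_self]
      _ ≤ μ (a * b) := h)
  inv_mem' := fun {a} ha => le_antisymm (fuzzy_le_one hμ _) (by
    have ha' : μ a = μ 1 := ha
    calc μ 1 = μ a := ha'.symm
      _ ≤ μ a⁻¹ := hμ.2.2 a)

lemma conj_pow_eq (b x : G) (m : ℕ) : (b * x * b⁻¹) ^ m = b * x ^ m * b⁻¹ := by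
  have h := map_pow (MulAut.conj b) x m
  simp only [MulAut.conj_apply] at h
  exact h.symm

lemma dvd_of_forall_pow_mem {N : Subgroup G} {d : ℕ}
    (hl : IsLeast {m : ℕ | 0 < m ∧ ∀ x : G, x ^ m ∈ N} d)
    {m : ℕ} (hm : ∀ x : G, x ^ m ∈ N) : d ∣ m := by
  obtain ⟨⟨hd0, hdN⟩, hmin⟩ := hl
  have hmod : ∀ x : G, x ^ (m % d) ∈ N := by
    intro x
    have h1 : x ^ m = (x ^ d) ^ (m / d) * x ^ (m % d) := by
      rw [← pow_mul, ← pow_add, Nat.div_add_mod]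
    have h2 : x ^ (m % d) = ((x ^ d) ^ (m / d))⁻¹ * x ^ m := by
      rw [h1]; group
    rw [h2]
    exact N.mul_mem (N.inv_mem (N.pow_mem (hdN x) _)) (hm x)
  rcases Nat.eq_zero_or_pos (m % d) with h | h
  · exact Nat.dvd_of_mod_eq_zero h
  · have h3 := hmin ⟨h, hmod⟩
    have h4 := Nat.mod_lt m hd0
    omega

lemma exists_normal_of_fuzzy {d : ℕ} {μ : G → ℝ} (hμ : IsFuzzySubgroup μ)
    (hl : IsLeast {m : ℕ | 0 < m ∧ ∀ x : G, μ (x ^ m) = μ 1} d) :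
    ∃ N : Subgroup G, N.Normal ∧ IsLeast {m : ℕ | 0 < m ∧ ∀ x : G, x ^ m ∈ N} d := by
  set H := levelSubgroup hμ with hH
  have hmemH : ∀ x : G, (μ x = μ 1) ↔ x ∈ H := fun x => Iff.rfl
  refine ⟨H.normalCore, inferInstance, ?_⟩
  have hiff : ∀ m : ℕ, (∀ x : G, x ^ m ∈ H.normalCore) ↔ (∀ x : G, μ (x ^ m) = μ 1) := by
    intro m
    constructor
    · intro h x
      exact (hmemH _).mpr (H.normalCore_le (h x))
    · intro h x
      show ∀ b : G, b * x ^ m * b⁻¹ ∈ H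
      intro b
      rw [← conj_pow_eq]
      exact (hmemH _).mp (h (b * x * b⁻¹))
  have hset : {m : ℕ | 0 < m ∧ ∀ x : G, x ^ m ∈ H.normalCore}
      = {m : ℕ | 0 < m ∧ ∀ x : G, μ (x ^ m) = μ 1} := by
    ext m
    exact and_congr Iff.rfl (hiff m)
  rw [hset]
  exact hl

lemma exp_quotient [Finite G] {N : Subgroup G} [N.Normal] {d : ℕ}
    (hl : IsLeast {m : ℕ | 0 < m ∧ ∀ x : G, x ^ m ∈ N} d) :
    Monoid.exponent (G ⧸ N) = d := by
  have key : ∀ m : ℕ, (∀ q : G ⧸ N, q ^ m = 1) ↔ (∀ x : G, x ^ m ∈ N) := by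
    intro m
    constructor
    · intro h x
      have hx := h (x : G ⧸ N)
      rwa [← QuotientGroup.mk_pow, QuotientGroup.eq_one_iff] at hx
    · intro h q
      induction q using QuotientGroup.induction_on with
      | H x => rw [← QuotientGroup.mk_pow, QuotientGroup.eq_one_iff]; exact h x
  have hdvd : Monoid.exponent (G ⧸ N) ∣ d :=
    Monoid.exponent_dvd_of_forall_pow_eq_one ((key d).mpr hl.1.2)
  have h2 : d ∣ Monoid.exponent (G ⧸ N) :=
    dvd_of_forall_pow_mem ⟨hl.1, hl.2⟩ ((key _).mp fun q => Monoid.pow_exponent_eq_one q)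
  exact Nat.dvd_antisymm hdvd h2

lemma quotient_cyclic [Finite G] {n p : ℕ} (hn : Nat.card G = n) (hp : p.Prime)
    {N : Subgroup G} [N.Normal]
    (hl : IsLeast {m : ℕ | 0 < m ∧ ∀ x : G, x ^ m ∈ N} (p ^ n.factorization p)) :
    IsCyclic (G ⧸ N) ∧ Nat.card (G ⧸ N) = p ^ n.factorization p := by
  set a := n.factorization p with ha
  set d := p ^ a with hd
  set m := Nat.card (G ⧸ N) with hm
  have hn0 : n ≠ 0 := by
    have := Nat.card_pos (α := G)
    omega
  have hexp : Monoid.exponent (G ⧸ N) = d := exp_quotient hl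
  have hmn : m ∣ n := by
    rw [← hn, Subgroup.card_eq_card_quotient_mul_card_subgroup N]
    exact Dvd.intro _ rfl
  have hm0 : m ≠ 0 := Nat.card_pos.ne'
  have hdm : d ∣ m := hexp ▸ Group.exponent_dvd_nat_card
  -- every prime dividing m equals p
  have hprimes : ∀ q : ℕ, q.Prime → q ∣ m → q = p := by
    intro q hq hqm
    haveI : Fact q.Prime := ⟨hq⟩
    obtain ⟨x, hx⟩ := exists_prime_orderOf_dvd_card' (G := G ⧸ N) q hqm
    have h1 : q ∣ d := by
      rw [← hx, ← hexp]; exact Monoid.order_dvd_exponent x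
    have h2 : q ∣ p := hq.dvd_of_dvd_pow h1
    exact (Nat.prime_dvd_prime_iff_eq hq hp).mp h2
  -- m = p ^ a
  have hvm : m.factorization p = a := by
    have hle : m.factorization p ≤ a := by
      have h1 : p ^ m.factorization p ∣ m := Nat.ordProj_dvd m p
      have h2 : p ^ m.factorization p ∣ n := h1.trans hmn
      exact (Nat.Prime.pow_dvd_iff_le_factorization hp hn0).mp h2
    have hge : a ≤ m.factorization p :=
      (Nat.Prime.pow_dvd_iff_le_factorization hp hm0).mp hdm
    omega
  have hcompl : m / p ^ m.factorization p = 1 := by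
    rw [Nat.eq_one_iff_not_exists_prime_dvd]
    intro q hq hqd
    have hqm : q ∣ m := hqd.trans (Nat.ordCompl_dvd m p)
    have : q = p := hprimes q hq hqm
    exact Nat.not_dvd_ordCompl hp hm0 (this ▸ hqd)
  have hcard : m = d := by
    have := Nat.ordProj_mul_ordCompl_eq_self m p
    rw [hcompl, mul_one] at this
    rw [← this, hvm]
  refine ⟨?_, hcard⟩
  -- G ⧸ N is a p-group of exponent d = p^a = card; find element of order d
  rcases Nat.eq_zero_or_pos a with ha0 | ha0
  · have h1 : Nat.card (G ⧸ N) = 1 := by rw [← hm, hcard, hd, ha0, pow_zero]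
    haveI : Subsingleton (G ⧸ N) := (Nat.card_eq_one_iff_unique.mp h1).1
    exact isCyclic_of_subsingleton
  · -- exponent = p^a with a > 0 : some element has order not dividing p^(a-1)
    have hlt : p ^ (a - 1) < d := by
      rw [hd]
      exact Nat.pow_lt_pow_right hp.one_lt (by omega)
    have hex : ∃ q : G ⧸ N, q ^ (p ^ (a - 1)) ≠ 1 := by
      by_contra hcon
      push_neg at hcon
      have := Monoid.exponent_dvd_of_forall_pow_eq_one hcon
      rw [hexp] at this
      have := Nat.le_of_dvd (Nat.pow_pos hp.pos) this
      omega
    obtain ⟨q, hq⟩ := hex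
    have hod : orderOf q ∣ p ^ a := by
      have := orderOf_dvd_natCard q
      rwa [← hm, hcard, hd] at this
    obtain ⟨i, hi, hoi⟩ := (Nat.dvd_prime_pow hp).mp hod
    have hia : i = a := by
      by_contra hne
      have hile : i ≤ a - 1 := by omega
      apply hq
      apply orderOf_dvd_iff_pow_eq_one.mp
      rw [hoi]
      exact pow_dvd_pow p hile
    have : orderOf q = Nat.card (G ⧸ N) := by
      rw [hoi, hia, ← hd, ← hcard]
    exact isCyclic_of_orderOf_eq_card q this

end Aux

theorem stmt_1 {G : Type*} [Group G] [Finite G] (n : ℕ) (hn : Nat.card G = n) :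
    IsCyclic G ↔
      ∀ d : ℕ, 0 < d → d ∣ n →
        ∃ μ : G → ℝ, IsFuzzySubgroup μ ∧
          IsLeast {m : ℕ | 0 < m ∧ ∀ x : G, μ (x ^ m) = μ 1} d := by
  constructor
  · -- forward: G cyclic, build indicator fuzzy subgroup of ⟨g^d⟩
    rintro ⟨g, hg⟩ d hd0 hdn
    have hog : orderOf g = n := by
      rw [orderOf_eq_card_of_forall_mem_zpowers hg, hn]
    set H := Subgroup.zpowers (g ^ d) with hH
    refine ⟨fun x => if x ∈ H then 1 else 0, ?_, ?_⟩
    · refine ⟨fun x => ?_, fun x y => ?_, fun x => ?_⟩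
      · by_cases hx : x ∈ H <;> simp [hx]
      · by_cases hx : x ∈ H <;> by_cases hy : y ∈ H
        · simp [hx, hy, H.mul_mem hx hy]
        all_goals
          simp only [if_pos, if_neg, hx, hy, if_true, if_false, ite_true, ite_false]
          split_ifs <;> norm_num [min_def]
      · by_cases hx : x ∈ H
        · simp [hx, H.inv_mem hx]
        · simp only [if_neg hx]
          split_ifs <;> norm_num
    · have hone : (1 : G) ∈ H := H.one_mem
      have hiff : ∀ z : G, (if z ∈ H then (1:ℝ) else 0) = (if (1:G) ∈ H then (1:ℝ) else 0)
          ↔ z ∈ H := by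
        intro z
        simp only [if_pos hone]
        by_cases hz : z ∈ H <;> simp [hz]
      constructor
      · refine ⟨hd0, fun x => ?_⟩
        show (if x ^ d ∈ H then (1:ℝ) else 0) = (if (1:G) ∈ H then (1:ℝ) else 0)
        rw [hiff]
        obtain ⟨k, hk⟩ := hg x
        rw [← hk, ← zpow_natCast, ← zpow_mul, mul_comm, zpow_mul, zpow_natCast]
        exact Subgroup.zpow_mem _ (Subgroup.mem_zpowers _) k
      · rintro m ⟨hm0, hm⟩
        have hgm : g ^ m ∈ H := (hiff _).mp (hm g)
        obtain ⟨t, ht⟩ := hgm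
        have ht' : (g ^ d) ^ t = g ^ m := ht
        have h1 : g ^ ((d : ℤ) * t - m) = 1 := by
          rw [zpow_sub, zpow_mul, zpow_natCast, zpow_natCast, ht']
          group
        have h2 : (n : ℤ) ∣ (d : ℤ) * t - m := by
          rw [← hog]
          exact orderOf_dvd_iff_zpow_eq_one.mpr h1
        have h3 : (d : ℤ) ∣ (m : ℤ) := by
          have hdn' : (d : ℤ) ∣ (n : ℤ) := Int.natCast_dvd_natCast.mpr hdn
          have h5 : (d : ℤ) ∣ (d : ℤ) * t - m := hdn'.trans h2
          have h4 : (d : ℤ) ∣ (d : ℤ) * t := Dvd.intro t rfl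
          have h6 := dvd_sub h4 h5
          rwa [sub_sub_cancel] at h6
        have : d ∣ m := Int.ofNat_dvd.mp h3
        exact Nat.le_of_dvd hm0 this
  · -- converse
    intro h
    have hn1 : 1 ≤ n := by
      have := Nat.card_pos (α := G)
      omega
    -- exponent G = n
    obtain ⟨μn, hμn, hln⟩ := h n (by omega) dvd_rfl
    obtain ⟨Nn, _, hlNn⟩ := exists_normal_of_fuzzy hμn hln
    have hexp : Monoid.exponent G = n := by
      have h1 : Monoid.exponent G ∈ {m : ℕ | 0 < m ∧ ∀ x : G, x ^ m ∈ Nn} := by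
        refine ⟨Nat.pos_of_ne_zero Monoid.exponent_ne_zero_of_finite, fun x => ?_⟩
        rw [Monoid.pow_exponent_eq_one]
        exact Nn.one_mem
      have h2 := hlNn.2 h1
      have h3 : Monoid.exponent G ∣ n := hn ▸ Group.exponent_dvd_nat_card
      have h4 := Nat.le_of_dvd (by omega) h3
      omega
    -- commutativity
    have hcomm : ∀ a b : G, a * b = b * a := by
      intro a b
      set c := a * b * a⁻¹ * b⁻¹ with hc
      have hc1 : c = 1 := by
        have hkey : ∀ p : ℕ, p.Prime → p ∣ n → ¬ p ∣ orderOf c := by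
          intro p hp hpn
          obtain ⟨μ, hμ, hl⟩ := h (p ^ n.factorization p)
            (Nat.pow_pos hp.pos) (Nat.ordProj_dvd n p)
          obtain ⟨N, hNnorm, hlN⟩ := exists_normal_of_fuzzy hμ hl
          haveI := hNnorm
          obtain ⟨hcyc, hcard⟩ := quotient_cyclic hn hp hlN
          -- c ∈ N since G ⧸ N is cyclic hence abelian
          have hcN : c ∈ N := by
            rw [← QuotientGroup.eq_one_iff]
            letI : CommGroup (G ⧸ N) := IsCyclic.commGroup
            have : ((c : G) : G ⧸ N)
                = (a : G ⧸ N) * b * (a : G ⧸ N)⁻¹ * (b : G ⧸ N)⁻¹ := by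
              rw [hc]
              simp [QuotientGroup.mk_mul, QuotientGroup.mk_inv]
            rw [this, mul_comm (a : G ⧸ N) (b : G ⧸ N)]
            group
          -- orderOf c divides card N = n / p^(v_p n)
          have hdvd1 : orderOf c ∣ Nat.card N := Subgroup.orderOf_dvd_natCard N hcN
          have hcardN : Nat.card N = n / p ^ n.factorization p := by
            have h5 := Subgroup.card_eq_card_quotient_mul_card_subgroup N
            rw [hn, hcard] at h5
            have hp0 : 0 < p ^ n.factorization p := Nat.pow_pos hp.pos
            exact (Nat.div_eq_of_eq_mul_left hp0 (h5.trans (mul_comm _ _))).symm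
          intro hpc
          have : p ∣ n / p ^ n.factorization p := dvd_trans hpc (hcardN ▸ hdvd1)
          exact Nat.not_dvd_ordCompl hp (by omega) this
        have hord : orderOf c = 1 := by
          rw [Nat.eq_one_iff_not_exists_prime_dvd]
          intro p hp hpc
          have h1 : orderOf c ∣ n := hn ▸ orderOf_dvd_natCard c
          exact hkey p hp (hpc.trans h1) hpc
        rwa [orderOf_eq_one_iff] at hord
      have h6 : a * b = (a * b * a⁻¹ * b⁻¹) * (b * a) := by group
      rw [← hc, hc1, one_mul] at h6
      exact h6
    letI : CommGroup G := { (inferInstance : Group G) with mul_comm := hcomm }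
    exact IsCyclic.of_exponent_eq_card (by rw [hexp, hn])
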